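/- If w is a right special word in the Thue–Morse sequence, then the image of w under the Thue–Morse substitution is also right special. -/

import Mathlib

/-- The Thue–Morse sequence: parity of the number of 1s in binary (fixed point of
`0 ↦ 01`, `1 ↦ 10` starting from `0`). -/
def tm (n : ℕ) : Fin 2 := Fin.ofNat 2 ((Nat.digits 2 n).count 1)

/-- A finite word occurs in the Thue–Morse sequence. -/
def OccursTM (w : List (Fin 2)) : Prop :=
  ∃ i : ℕ, ∀ j : Fin w.length, tm (i + j) = w.get j

/-- `w` is right special in the Thue–Morse sequence. -/
def RightSpecialTM (w : List (Fin 2)) : Prop :=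
  ∃ a b : Fin 2, a ≠ b ∧ OccursTM (w ++ [a]) ∧ OccursTM (w ++ [b])

/-- The Thue–Morse substitution `0 ↦ 01`, `1 ↦ 10`, extended to words. -/
def tmSubst (w : List (Fin 2)) : List (Fin 2) :=
  w.flatMap (fun x => if x = 0 then [0, 1] else [1, 0])

lemma tmSubst_eq (w : List (Fin 2)) : tmSubst w = w.flatMap (fun x => [x, x + 1]) := by
  unfold tmSubst
  congr 1
  funext x
  fin_cases x <;> decide

lemma tmSubst_length (w : List (Fin 2)) : (tmSubst w).length = 2 * w.length := by
  rw [tmSubst_eq]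
  induction w with
  | nil => simp
  | cons a t ih => simp at ih ⊢; omega

lemma tm_two_mul (n : ℕ) : tm (2 * n) = tm n := by
  rcases Nat.eq_zero_or_pos n with h | h
  · simp [h]
  · unfold tm
    rw [Nat.digits_def' (by norm_num : 1 < 2) (by omega)]
    have h1 : 2 * n % 2 = 0 := by omega
    have h2 : 2 * n / 2 = n := by omega
    rw [h1, h2]
    simp

lemma tm_two_mul_add_one (n : ℕ) : tm (2 * n + 1) = tm n + 1 := by
  unfold tm
  rw [Nat.digits_def' (by norm_num : 1 < 2) (by omega)]
  have h1 : (2 * n + 1) % 2 = 1 := by omega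
  have h2 : (2 * n + 1) / 2 = n := by omega
  rw [h1, h2]
  simp [List.count_cons]
  exact Fin.ext (by simp [Fin.val_add])

open Fin.NatCast in
lemma flatMap_getElem (w : List (Fin 2)) (q r : ℕ) (hq : q < w.length) (hr : r < 2)
    (hj : 2 * q + r < (w.flatMap fun x => [x, x + 1]).length) :
    (w.flatMap fun x => [x, x + 1])[2 * q + r] = w[q] + (r : Fin 2) := by
  induction w generalizing q with
  | nil => simp at hq
  | cons a t ih =>
    match q with
    | 0 => interval_cases r <;> simp
    | q + 1 =>
      simp only [List.flatMap_cons, show 2 * (q + 1) + r = ((2 * q + r) + 1) + 1 from by ring,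
        show ([a, a + 1] ++ t.flatMap fun x => [x, x + 1]) =
          a :: (a + 1) :: t.flatMap fun x => [x, x + 1] from rfl,
        List.getElem_cons_succ] at hj ⊢
      exact ih q (by simpa using hq) (by simp only [List.length_cons] at hj; omega)

lemma tmSubst_eq' (w : List (Fin 2)) : tmSubst w = w.flatMap (fun x => [x, x + 1]) := by
  rw [tmSubst_eq]

open Fin.NatCast in
lemma tmSubst_getElem (w : List (Fin 2)) (q r : ℕ) (hq : q < w.length) (hr : r < 2)
    (hj : 2 * q + r < (tmSubst w).length) :
    (tmSubst w)[2 * q + r] = w[q] + (r : Fin 2) := by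
  rw [List.getElem_of_eq (tmSubst_eq' w) hj]
  exact flatMap_getElem w q r hq hr (by rwa [tmSubst_eq'] at hj)

lemma occursTM_tmSubst {w : List (Fin 2)} (h : OccursTM w) : OccursTM (tmSubst w) := by
  obtain ⟨i, hi⟩ := h
  refine ⟨2 * i, fun j => ?_⟩
  obtain ⟨jv, hjlt⟩ := j
  obtain ⟨q, r, hr2, rfl⟩ : ∃ q r, r < 2 ∧ jv = 2 * q + r :=
    ⟨jv / 2, jv % 2, Nat.mod_lt _ (by norm_num), by omega⟩
  have hqlt : q < w.length := by
    have := tmSubst_length w; omega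
  have hval : tm (i + q) = w[q] := hi ⟨q, hqlt⟩
  show tm (2 * i + (2 * q + r)) = (tmSubst w)[2 * q + r]'hjlt
  rw [tmSubst_getElem w q r hqlt hr2 hjlt,
    show 2 * i + (2 * q + r) = 2 * (i + q) + r by ring]
  interval_cases r
  · rw [add_zero, tm_two_mul, hval]; simp
  · rw [tm_two_mul_add_one, hval]; norm_num; rfl

lemma occursTM_prefix {u v : List (Fin 2)} (h : OccursTM (u ++ v)) : OccursTM u := by
  obtain ⟨i, hi⟩ := h
  refine ⟨i, fun j => ?_⟩
  have hj : (j : ℕ) < (u ++ v).length := by simp; omega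
  have := hi ⟨j, hj⟩
  simpa [List.get_eq_getElem, List.getElem_append_left j.2] using this

lemma tmSubst_append (u v : List (Fin 2)) :
    tmSubst (u ++ v) = tmSubst u ++ tmSubst v := by
  simp [tmSubst]

/-- The substitution image of a right special word of Thue–Morse is right special. -/
theorem tmSubst_rightSpecial (w : List (Fin 2)) (h : RightSpecialTM w) :
    RightSpecialTM (tmSubst w) := by
  obtain ⟨a, b, hab, ha, hb⟩ := h
  refine ⟨a, b, hab, ?_, ?_⟩
  · have := occursTM_tmSubst ha
    rw [tmSubst_append] at this
    have he : tmSubst [a] = [a, a + 1] := by rw [tmSubst_eq]; simp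
    rw [he, show (tmSubst w ++ [a, a+1]) = (tmSubst w ++ [a]) ++ [a+1] by simp] at this
    exact occursTM_prefix this
  · have := occursTM_tmSubst hb
    rw [tmSubst_append] at this
    have he : tmSubst [b] = [b, b + 1] := by rw [tmSubst_eq]; simp
    rw [he, show (tmSubst w ++ [b, b+1]) = (tmSubst w ++ [b]) ++ [b+1] by simp] at this
    exact occursTM_prefix this
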